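/- Let q, q̃ : ℝ → ℂ be differentiable and nonvanishing on a set Ω, with polar forms q = r e^{iθ}, q̃ = r̃ e^{iθ̃}, and let φ = θ̃ − θ. Suppose for some 0 < σ < 1/2 and constants D, M > 0: |q̃' − q'| ≤ Dσ, |r − r̃|/r ≤ σ, |φ| ≤ σ, |q'| ≤ D, r ≥ M, and r̃ ≥ M/2. Then |φ'| ≤ 5(D/M)σ on Ω. -/

import Mathlib

open Complex

lemma abs_exp_mul_I_sub_one_le (x : ℝ) :
    ‖Complex.exp ((x : ℂ) * Complex.I) - 1‖ ≤ |x| := by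
  rw [Complex.norm_def, ← Real.sqrt_sq_eq_abs]
  apply Real.sqrt_le_sqrt
  have h := Real.one_sub_sq_div_two_le_cos (x := x)
  simp only [Complex.normSq_apply, Complex.sub_re, Complex.sub_im,
    Complex.exp_ofReal_mul_I_re, Complex.exp_ofReal_mul_I_im, Complex.one_re, Complex.one_im]
  nlinarith [Real.sin_sq_add_cos_sq x]

lemma polar_deriv_im (q : ℝ → ℂ) (r θ : ℝ → ℝ)
    (hqd : Differentiable ℝ q) (hθd : Differentiable ℝ θ)
    (hpolar : ∀ ω, q ω = (r ω : ℂ) * Complex.exp ((θ ω : ℂ) * Complex.I))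
    (ω : ℝ) (hr : r ω ≠ 0) :
    (deriv q ω / q ω).im = deriv θ ω := by
  have hg : (fun x => ((r x : ℝ) : ℂ)) = fun x => q x * Complex.exp (-((θ x : ℂ) * Complex.I)) := by
    funext x
    rw [hpolar x, mul_assoc, ← Complex.exp_add]
    simp
  have hθc : Differentiable ℝ (fun x => -((θ x : ℂ) * Complex.I)) := by
    apply Differentiable.neg
    exact (Complex.ofRealCLM.differentiable.comp hθd).mul_const _
  have hcd : Differentiable ℝ (fun x => ((r x : ℝ) : ℂ)) := by
    rw [hg]; exact hqd.mul hθc.cexp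
  set a := deriv (fun x => ((r x : ℝ) : ℂ)) ω with ha
  have hca : HasDerivAt (fun x => ((r x : ℝ) : ℂ)) a ω := (hcd ω).hasDerivAt
  have haim : a.im = 0 := by
    have h1 : HasDerivAt (fun x => ((r x : ℝ) : ℂ).im) (Complex.imCLM a) ω :=
      Complex.imCLM.hasFDerivAt.comp_hasDerivAt ω hca
    have h2 : (fun x => ((r x : ℝ) : ℂ).im) = fun _ => (0 : ℝ) := by
      funext x; simp
    rw [h2] at h1
    simpa using h1.unique (hasDerivAt_const ω 0)
  set td : ℝ := deriv θ ω with htd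
  have hθ' : HasDerivAt θ td ω := (hθd ω).hasDerivAt
  have hθI : HasDerivAt (fun x => (θ x : ℂ) * Complex.I) ((td : ℂ) * Complex.I) ω :=
    hθ'.ofReal_comp.mul_const _
  have hexp : HasDerivAt (fun x => Complex.exp ((θ x : ℂ) * Complex.I))
      (Complex.exp ((θ ω : ℂ) * Complex.I) * ((td : ℂ) * Complex.I)) ω := hθI.cexp
  have hqder : HasDerivAt q
      (a * Complex.exp ((θ ω : ℂ) * Complex.I) +
        (r ω : ℂ) * (Complex.exp ((θ ω : ℂ) * Complex.I) * ((td : ℂ) * Complex.I))) ω := by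
    have := hca.mul hexp
    have hq' : q = fun x => ((r x : ℝ) : ℂ) * Complex.exp ((θ x : ℂ) * Complex.I) := by
      funext x; exact hpolar x
    rw [hq']
    convert this using 1
    all_goals rfl
  have hE : Complex.exp ((θ ω : ℂ) * Complex.I) ≠ 0 := Complex.exp_ne_zero _
  have hrC : ((r ω : ℝ) : ℂ) ≠ 0 := by exact_mod_cast Complex.ofReal_ne_zero.mpr hr
  have ha' : a = ((a.re : ℝ) : ℂ) := by
    apply Complex.ext <;> simp [haim]
  have : deriv q ω / q ω = ((a.re / r ω : ℝ) : ℂ) + (td : ℂ) * Complex.I := by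
    rw [hqder.deriv, hpolar ω, ha']
    simp only [Complex.ofReal_re]
    push_cast
    field_simp
  rw [this]
  simp

theorem phase_derivative_noise_bound
    (Ω : Set ℝ) (q qt : ℝ → ℂ) (r rt θ θt : ℝ → ℝ)
    (hq : ∀ ω ∈ Ω, q ω ≠ 0) (hqt : ∀ ω ∈ Ω, qt ω ≠ 0)
    (hqd : Differentiable ℝ q) (hqtd : Differentiable ℝ qt)
    (hθd : Differentiable ℝ θ) (hθtd : Differentiable ℝ θt)
    (hpolar : ∀ ω, q ω = (r ω : ℂ) * Complex.exp ((θ ω : ℂ) * Complex.I))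
    (hpolart : ∀ ω, qt ω = (rt ω : ℂ) * Complex.exp ((θt ω : ℂ) * Complex.I))
    (φ : ℝ → ℝ) (hφ : φ = fun ω => θt ω - θ ω)
    (σ D M : ℝ) (hσ : 0 < σ) (hσ2 : σ < 1/2) (hD : 0 < D) (hM : 0 < M)
    (h1 : ∀ ω ∈ Ω, ‖deriv qt ω - deriv q ω‖ ≤ D * σ)
    (h2 : ∀ ω ∈ Ω, |r ω - rt ω| / r ω ≤ σ)
    (h3 : ∀ ω ∈ Ω, |φ ω| ≤ σ)
    (h4 : ∀ ω ∈ Ω, ‖deriv q ω‖ ≤ D)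
    (h5 : ∀ ω ∈ Ω, M ≤ r ω)
    (h6 : ∀ ω ∈ Ω, M / 2 ≤ rt ω) :
    ∀ ω ∈ Ω, |deriv φ ω| ≤ 5 * (D / M) * σ := by
  intro ω hω
  have hr : (0:ℝ) < r ω := lt_of_lt_of_le hM (h5 ω hω)
  have hrt : (0:ℝ) < rt ω := lt_of_lt_of_le (by linarith) (h6 ω hω)
  -- deriv φ = Im (qt'/qt - q'/q)
  have hderφ : deriv φ ω = (deriv qt ω / qt ω - deriv q ω / q ω).im := by
    rw [hφ, deriv_fun_sub (hθtd ω) (hθd ω), Complex.sub_im,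
      polar_deriv_im q r θ hqd hθd hpolar ω (ne_of_gt hr),
      polar_deriv_im qt rt θt hqtd hθtd hpolart ω (ne_of_gt hrt)]
  -- decomposition
  have hdecomp : deriv qt ω / qt ω - deriv q ω / q ω =
      (deriv qt ω - deriv q ω) / qt ω + deriv q ω * (q ω - qt ω) / (q ω * qt ω) := by
    field_simp [hq ω hω, hqt ω hω]
    ring
  -- abs q = r, abs qt = rt
  have habsq : ‖q ω‖ = r ω := by
    rw [hpolar ω]
    simp [Complex.norm_exp_ofReal_mul_I, abs_of_pos hr]
  have habsqt : ‖qt ω‖ = rt ω := by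
    rw [hpolart ω]
    simp [Complex.norm_exp_ofReal_mul_I, abs_of_pos hrt]
  -- bound on |q - qt|
  have hqsub : ‖q ω - qt ω‖ ≤ |r ω - rt ω| + rt ω * σ := by
    have heq : q ω - qt ω = ((r ω - rt ω : ℝ) : ℂ) * Complex.exp ((θ ω : ℂ) * Complex.I)
        + (rt ω : ℂ) * (Complex.exp ((θ ω : ℂ) * Complex.I) *
            (1 - Complex.exp ((φ ω : ℂ) * Complex.I))) := by
      rw [hpolar ω, hpolart ω, hφ]
      have : Complex.exp ((θ ω : ℂ) * Complex.I) * Complex.exp (((θt ω - θ ω : ℝ) : ℂ) * Complex.I)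
          = Complex.exp ((θt ω : ℂ) * Complex.I) := by
        rw [← Complex.exp_add]; push_cast; ring_nf
      push_cast
      rw [mul_sub, mul_one, mul_sub]
      push_cast at this
      rw [this]
      ring
    rw [heq]
    refine le_trans (norm_add_le _ _) ?_
    have e1 : ‖((r ω - rt ω : ℝ) : ℂ) * Complex.exp ((θ ω : ℂ) * Complex.I)‖
        = |r ω - rt ω| := by
      simp [Complex.norm_exp_ofReal_mul_I, ← Complex.ofReal_sub, Complex.norm_real]
    have e2 : ‖(rt ω : ℂ) * (Complex.exp ((θ ω : ℂ) * Complex.I) *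
        (1 - Complex.exp ((φ ω : ℂ) * Complex.I)))‖ ≤ rt ω * σ := by
      rw [norm_mul, norm_mul, Complex.norm_exp_ofReal_mul_I, one_mul, Complex.norm_real, Real.norm_eq_abs,
        abs_of_pos hrt]
      apply mul_le_mul_of_nonneg_left _ (le_of_lt hrt)
      calc ‖1 - Complex.exp ((φ ω : ℂ) * Complex.I)‖
          = ‖Complex.exp ((φ ω : ℂ) * Complex.I) - 1‖ := norm_sub_rev _ _
        _ ≤ |φ ω| := abs_exp_mul_I_sub_one_le (φ ω)
        _ ≤ σ := h3 ω hω
    linarith [e1 ▸ le_refl ‖((r ω - rt ω : ℝ) : ℂ) * Complex.exp ((θ ω : ℂ) * Complex.I)‖]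
  have hrr : |r ω - rt ω| ≤ σ * r ω := by
    have := h2 ω hω
    rw [div_le_iff₀ hr] at this
    linarith
  -- main bound
  set X := ‖deriv qt ω - deriv q ω‖ with hX
  set Y := ‖deriv q ω‖ with hY
  set Z := ‖q ω - qt ω‖ with hZ
  have hXb : X ≤ D * σ := h1 ω hω
  have hYb : Y ≤ D := h4 ω hω
  have hZb : Z ≤ σ * r ω + rt ω * σ := le_trans hqsub (by linarith)
  have hbound : ‖deriv qt ω / qt ω - deriv q ω / q ω‖ ≤ 5 * (D / M) * σ := by
    rw [hdecomp]
    refine le_trans (norm_add_le _ _) ?_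
    have t1 : ‖(deriv qt ω - deriv q ω) / qt ω‖ = X / rt ω := by
      rw [norm_div, habsqt]
    have t2 : ‖deriv q ω * (q ω - qt ω) / (q ω * qt ω)‖ = Y * Z / (r ω * rt ω) := by
      rw [norm_div, norm_mul, norm_mul, habsq, habsqt]
    rw [t1, t2]
    have key : X / rt ω + Y * Z / (r ω * rt ω) = (X * r ω + Y * Z) / (r ω * rt ω) := by
      field_simp
    rw [key, show (5 : ℝ) * (D / M) * σ = 5 * D * σ / M by ring,
      div_le_div_iff₀ (mul_pos hr hrt) hM]
    have hXnn : 0 ≤ X := norm_nonneg _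
    have hYnn : 0 ≤ Y := norm_nonneg _
    have hZnn : 0 ≤ Z := norm_nonneg _
    have h5' := h5 ω hω
    have h6' := h6 ω hω
    nlinarith [mul_le_mul hXb (le_refl (r ω)) (le_of_lt hr) (by positivity : (0:ℝ) ≤ D * σ),
      mul_le_mul hYb hZb hZnn (le_of_lt hD),
      mul_pos hr hrt, mul_pos hσ hD,
      mul_le_mul_of_nonneg_left h6' (le_of_lt (mul_pos (mul_pos hD hσ) hr)),
      mul_le_mul_of_nonneg_left h5' (le_of_lt (mul_pos (mul_pos hD hσ) hrt))]
  rw [hderφ]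
  exact le_trans (Complex.abs_im_le_norm _) hbound
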